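/- Let k ≥ 2 be an integer, let p₁, p_k be real numbers with 0 < p₁ < p_k < 1 and p_k < k·p₁, let W, v_k be real numbers and L > 0, and let U : ℝ → ℝ be differentiable with U'(x) > 0 for all x and with U' strictly antitone on ℝ (hence U is strictly increasing and strictly concave). Define H^1(L_c) = p₁·U(W − p₁·L_c − L + L_c) + (1 − p₁)·U(W − p₁·L_c) and H^k(t, L_c) = p₁·U(v_k·W − p_k·L_c − L − (k−1)·t + L_c) + (p_k − p₁)·U(v_k·W − p_k·L_c − L + t + L_c) + (1 − p_k)·U(v_k·W − p_k·L_c), and the objective J(s, t, L_c) = (1 − s)·H^1(L_c) + s·H^k(t, L_c) over the feasible set {(s,t,L_c) : 0 ≤ s ≤ 1, 0 ≤ t ≤ L, L_c ≥ 0}. If W − p₁·L ≤ v_k·W − p_k·L, then (s, t, L_c) = (1, 0, L) is a maximizer of J over the feasible set, with optimal value U(v_k·W − p_k·L). -/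

import Mathlib

/-- Three-point Jensen inequality for a concave function on ℝ. -/
lemma jensen3 {U : ℝ → ℝ} (h : ConcaveOn ℝ Set.univ U)
    {w1 w2 w3 a b c : ℝ} (h1 : 0 ≤ w1) (h2 : 0 ≤ w2) (h3 : 0 ≤ w3)
    (hs : w1 + w2 + w3 = 1) :
    w1 * U a + w2 * U b + w3 * U c ≤ U (w1 * a + w2 * b + w3 * c) := by
  rcases eq_or_lt_of_le (add_nonneg h1 h2) with hq | hq
  · have hw1 : w1 = 0 := le_antisymm (by linarith) h1
    have hw2 : w2 = 0 := le_antisymm (by linarith) h2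
    have hw3 : w3 = 1 := by linarith
    simp [hw1, hw2, hw3]
  · set q : ℝ := w1 + w2 with hqdef
    have hqne : q ≠ 0 := ne_of_gt hq
    set m : ℝ := (w1 / q) * a + (w2 / q) * b with hm
    have step1 : (w1 / q) * U a + (w2 / q) * U b ≤ U m := by
      have := h.2 (Set.mem_univ a) (Set.mem_univ b)
        (div_nonneg h1 hq.le) (div_nonneg h2 hq.le)
        (by field_simp; exact hqdef.symm)
      simpa [smul_eq_mul, hm] using this
    have step2 : q * U m + w3 * U c ≤ U (q * m + w3 * c) := by
      have := h.2 (Set.mem_univ m) (Set.mem_univ c) hq.le h3 (by linarith)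
      simpa [smul_eq_mul] using this
    have hqm : q * m = w1 * a + w2 * b := by
      rw [hm]; field_simp
      try ring
    have : w1 * U a + w2 * U b ≤ q * U m := by
      have := mul_le_mul_of_nonneg_left step1 hq.le
      calc w1 * U a + w2 * U b = q * ((w1 / q) * U a + (w2 / q) * U b) := by
            field_simp
            try ring
        _ ≤ q * U m := this
    calc w1 * U a + w2 * U b + w3 * U c ≤ q * U m + w3 * U c := by linarith
      _ ≤ U (q * m + w3 * c) := step2
      _ = U (w1 * a + w2 * b + w3 * c) := by rw [hqm]

/-- Scenario B contract design (Theorem 2, second case): if `W − p₁·L ≤ v_k·W − p_k·L`,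
then `(s, t, L_c) = (1, 0, L)` maximizes the objective
`J(s,t,L_c) = (1 − s)·H¹(L_c) + s·Hᵏ(t, L_c)` over the feasible set
`{(s,t,L_c) : 0 ≤ s ≤ 1, 0 ≤ t ≤ L, L_c ≥ 0}`, with optimal value `U(v_k·W − p_k·L)`. -/
theorem scenarioB_optimal_contract_participation
    (k : ℕ) (hk : 2 ≤ k) (p₁ pk W vk L : ℝ) (hL : 0 < L)
    (hp₁ : 0 < p₁) (hp₁k : p₁ < pk) (hpk1 : pk < 1) (hpk : pk < (k : ℝ) * p₁)
    (U : ℝ → ℝ) (hUdiff : Differentiable ℝ U)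
    (hU' : ∀ x : ℝ, 0 < deriv U x) (hU'anti : StrictAnti (deriv U))
    (H1 : ℝ → ℝ)
    (hH1 : ∀ Lc : ℝ, H1 Lc =
      p₁ * U (W - p₁ * Lc - L + Lc) + (1 - p₁) * U (W - p₁ * Lc))
    (Hk : ℝ → ℝ → ℝ)
    (hHk : ∀ t Lc : ℝ, Hk t Lc =
      p₁ * U (vk * W - pk * Lc - L - ((k : ℝ) - 1) * t + Lc) +
      (pk - p₁) * U (vk * W - pk * Lc - L + t + Lc) +
      (1 - pk) * U (vk * W - pk * Lc))
    (J : ℝ × ℝ × ℝ → ℝ)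
    (hJ : ∀ x : ℝ × ℝ × ℝ, J x = (1 - x.1) * H1 x.2.2 + x.1 * Hk x.2.1 x.2.2)
    (F : Set (ℝ × ℝ × ℝ))
    (hF : F = {x : ℝ × ℝ × ℝ |
      0 ≤ x.1 ∧ x.1 ≤ 1 ∧ 0 ≤ x.2.1 ∧ x.2.1 ≤ L ∧ 0 ≤ x.2.2})
    (hcase : W - p₁ * L ≤ vk * W - pk * L) :
    IsMaxOn J F (1, 0, L) ∧ J (1, 0, L) = U (vk * W - pk * L) := by
  have hmono : Monotone U := (strictMono_of_deriv_pos hU').monotone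
  have hconc : ConcaveOn ℝ Set.univ U :=
    (StrictAnti.strictConcaveOn_univ_of_deriv hUdiff.continuous hU'anti).concaveOn
  set V : ℝ := U (vk * W - pk * L) with hV
  -- value at the candidate point
  have hval : J (1, 0, L) = V := by
    rw [hJ, hHk]
    have e1 : vk * W - pk * L - L - ((k : ℝ) - 1) * 0 + L = vk * W - pk * L := by ring
    have e2 : vk * W - pk * L - L + 0 + L = vk * W - pk * L := by ring
    simp only [e1, e2]
    ring
  refine ⟨?_, hval⟩
  intro x hx
  rw [hF] at hx
  obtain ⟨hs0, hs1, ht0, htL, hLc0⟩ := hx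
  obtain ⟨s, t, Lc⟩ := x
  simp only at hs0 hs1 ht0 htL hLc0
  -- bound H1
  have hH1le : H1 Lc ≤ V := by
    rw [hH1]
    have j2 : p₁ * U (W - p₁ * Lc - L + Lc) + (1 - p₁) * U (W - p₁ * Lc) + 0 * U 0 ≤
        U (p₁ * (W - p₁ * Lc - L + Lc) + (1 - p₁) * (W - p₁ * Lc) + 0 * 0) :=
      jensen3 hconc (le_of_lt hp₁) (by linarith) le_rfl (by ring)
    have e : p₁ * (W - p₁ * Lc - L + Lc) + (1 - p₁) * (W - p₁ * Lc) + 0 * 0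
        = W - p₁ * L := by ring
    rw [e] at j2
    calc p₁ * U (W - p₁ * Lc - L + Lc) + (1 - p₁) * U (W - p₁ * Lc)
        ≤ U (W - p₁ * L) := by linarith
      _ ≤ V := hmono hcase
  -- bound Hk
  have hHkle : Hk t Lc ≤ V := by
    rw [hHk]
    have j3 := jensen3 hconc (w1 := p₁) (w2 := pk - p₁) (w3 := 1 - pk) (a := vk * W - pk * Lc - L - ((k : ℝ) - 1) * t + Lc)
      (b := vk * W - pk * Lc - L + t + Lc) (c := vk * W - pk * Lc)
      (le_of_lt hp₁) (by linarith) (by linarith) (by ring)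
    have e : p₁ * (vk * W - pk * Lc - L - ((k : ℝ) - 1) * t + Lc) +
        (pk - p₁) * (vk * W - pk * Lc - L + t + Lc) + (1 - pk) * (vk * W - pk * Lc)
        = vk * W - pk * L + t * (pk - (k : ℝ) * p₁) := by ring
    rw [e] at j3
    have hle : vk * W - pk * L + t * (pk - (k : ℝ) * p₁) ≤ vk * W - pk * L := by
      nlinarith
    exact j3.trans (hmono hle)
  -- combine
  have : J (s, t, Lc) ≤ V := by
    rw [hJ]
    simp only
    nlinarith [hH1le, hHkle, hs0, hs1]
  simpa [hval] using this
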